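/- (Theorem 2, convergence rate.) Suppose G is bounded below with infimum G*, the constant step size satisfies 0 < α < 2/(L·σ²), and set κ = (α/n)·(1 − L·α·σ²/2) > 0. Let (B_t)_{t≥0} be an i.i.d. sequence of batches with common distribution μ, where μ(i ∈ B) ≥ p > 0 for every index i ∈ {1, …, M}. Fix a deterministic initial point θ_0 ∈ ℝ^d and define the random iterates θ_{t+1} = U(θ_t, B_t, α). Then for every horizon T ≥ 1, min_{0 ≤ t ≤ T−1} E[‖∇G(θ_t)‖²] ≤ √((G(θ_0) − G*)/(p·κ)) · (1/√T). -/

import Mathlib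

open scoped RealInnerProductSpace BigOperators
open MeasureTheory

section AuxLemmas

lemma descent_lemma {E : Type*} [NormedAddCommGroup E] [InnerProductSpace ℝ E] [CompleteSpace E]
    {G : E → ℝ} {L : ℝ} (hG : Differentiable ℝ G)
    (hGL : ∀ x y, ‖gradient G x - gradient G y‖ ≤ L * ‖x - y‖)
    (x y : E) :
    G y ≤ G x + ⟪gradient G x, y - x⟫ + L / 2 * ‖y - x‖ ^ 2 := by
  set v := y - x with hv
  have hline : ∀ t : ℝ, HasDerivAt (fun t : ℝ => x + t • v) v t := by
    intro t
    simpa using ((hasDerivAt_id t).smul_const v).const_add x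
  have hφ : ∀ t : ℝ, HasDerivAt (fun t : ℝ => G (x + t • v))
      ⟪gradient G (x + t • v), v⟫ t := by
    intro t
    have h2 : HasFDerivAt G (InnerProductSpace.toDual ℝ E (gradient G (x + t • v)))
        (x + t • v) := hasGradientAt_iff_hasFDerivAt.mp (hG _).hasGradientAt
    have := h2.comp_hasDerivAt t (hline t)
    rw [InnerProductSpace.toDual_apply_apply] at this
    exact this
  set c1 : ℝ := ⟪gradient G x, v⟫ with hc1
  set c2 : ℝ := L / 2 * ‖v‖ ^ 2 with hc2
  set ψ : ℝ → ℝ := fun t => G (x + t • v) - t * c1 - t ^ 2 * c2 with hψdef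
  have hψ : ∀ t : ℝ, HasDerivAt ψ
      (⟪gradient G (x + t • v), v⟫ - c1 - 2 * t * c2) t := by
    intro t
    have h1 : HasDerivAt (fun t : ℝ => t * c1) c1 t := by
      simpa using (hasDerivAt_id t).mul_const c1
    have h2 : HasDerivAt (fun t : ℝ => t ^ 2 * c2) (2 * t * c2) t := by
      have := (hasDerivAt_pow 2 t).mul_const c2
      simpa [mul_comm] using this
    exact ((hφ t).sub h1).sub h2
  have key : ψ 1 ≤ ψ 0 := by
    have hanti : AntitoneOn ψ (Set.Icc (0:ℝ) 1) := by
      apply antitoneOn_of_deriv_nonpos (convex_Icc 0 1)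
      · exact fun t _ => ((hψ t).differentiableAt).continuousAt.continuousWithinAt
      · intro t _
        exact ((hψ t).differentiableAt).differentiableWithinAt
      · intro t ht
        rw [interior_Icc] at ht
        rw [(hψ t).deriv]
        have hineq : ⟪gradient G (x + t • v) - gradient G x, v⟫ ≤ 2 * t * c2 := by
          calc ⟪gradient G (x + t • v) - gradient G x, v⟫
              ≤ ‖gradient G (x + t • v) - gradient G x‖ * ‖v‖ := real_inner_le_norm _ _
            _ ≤ (L * ‖(x + t • v) - x‖) * ‖v‖ := by
                gcongr; exact hGL _ _
            _ = 2 * t * c2 := by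
                simp [norm_smul, abs_of_nonneg ht.1.le, hc2]
                ring
        have := hineq
        rw [inner_sub_left] at this
        linarith
    have := hanti (Set.mem_Icc.mpr ⟨le_refl 0, zero_le_one⟩)
      (Set.mem_Icc.mpr ⟨zero_le_one, le_refl 1⟩) zero_le_one
    exact this
  have h1 : ψ 1 = G y - c1 - c2 := by
    simp [hψdef, hv]
  have h0 : ψ 0 = G x := by simp [hψdef]
  rw [h1, h0] at key
  linarith

lemma weighted_jensen {ι : Type*} [Fintype ι] (P x : ι → ℝ) (hP : ∀ b, 0 ≤ P b)
    (hP1 : ∑ b, P b = 1) :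
    ∑ b, P b * x b ≤ Real.sqrt (∑ b, P b * x b ^ 2) := by
  have h2 : (∑ b, P b * x b) ^ 2 ≤ ∑ b, P b * x b ^ 2 := by
    have := Finset.sum_mul_sq_le_sq_mul_sq Finset.univ
      (fun b => Real.sqrt (P b)) (fun b => Real.sqrt (P b) * x b)
    have e1 : ∀ b, Real.sqrt (P b) * (Real.sqrt (P b) * x b) = P b * x b := by
      intro b; rw [← mul_assoc, Real.mul_self_sqrt (hP b)]
    have e2 : ∀ b, Real.sqrt (P b) ^ 2 = P b := fun b => Real.sq_sqrt (hP b)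
    have e3 : ∀ b, (Real.sqrt (P b) * x b) ^ 2 = P b * x b ^ 2 := by
      intro b; rw [mul_pow, e2]
    calc (∑ b, P b * x b) ^ 2
        = (∑ b, Real.sqrt (P b) * (Real.sqrt (P b) * x b)) ^ 2 := by
          congr 1; exact Finset.sum_congr rfl fun b _ => (e1 b).symm
      _ ≤ (∑ b, Real.sqrt (P b) ^ 2) * ∑ b, (Real.sqrt (P b) * x b) ^ 2 := this
      _ = ∑ b, P b * x b ^ 2 := by
          rw [Finset.sum_congr rfl fun b _ => e2 b, hP1, one_mul]
          exact Finset.sum_congr rfl fun b _ => e3 b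
  nlinarith [Real.sq_sqrt (le_trans (sq_nonneg _) h2), Real.sqrt_nonneg (∑ b, P b * x b ^ 2),
    sq_nonneg (∑ b, P b * x b - Real.sqrt (∑ b, P b * x b ^ 2))]

lemma gradient_avg {E : Type*} [NormedAddCommGroup E] [InnerProductSpace ℝ E] [CompleteSpace E]
    {m : ℕ} (g : Fin m → E → ℝ) (hg : ∀ i, Differentiable ℝ (g i)) (c : ℝ)
    (G : E → ℝ) (hG : ∀ x, G x = c * ∑ i, g i x) (x : E) :
    gradient G x = c • ∑ i, gradient (g i) x := by
  have hfd : ∀ i, HasFDerivAt (g i) (InnerProductSpace.toDual ℝ E (gradient (g i) x)) x :=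
    fun i => hasGradientAt_iff_hasFDerivAt.mp ((hg i) x).hasGradientAt
  have hsum : HasFDerivAt (fun y => ∑ i, g i y)
      (∑ i, InnerProductSpace.toDual ℝ E (gradient (g i) x)) x :=
    HasFDerivAt.fun_sum (fun i _ => hfd i)
  have hmul : HasFDerivAt G
      (c • ∑ i, InnerProductSpace.toDual ℝ E (gradient (g i) x)) x := by
    have := hsum.const_smul c
    apply this.congr_of_eventuallyEq
    filter_upwards with y
    rw [hG y]; simp [smul_eq_mul]
  have : HasGradientAt G (c • ∑ i, gradient (g i) x) x := by
    rw [hasGradientAt_iff_hasFDerivAt]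
    convert hmul using 1
    exacts [rfl, by simp [map_sum]]
  exact this.gradient

set_option maxHeartbeats 1600000 in
lemma step_avg {E : Type*} [NormedAddCommGroup E] [InnerProductSpace ℝ E] [CompleteSpace E]
    (N M n : ℕ) (hM : 0 < M) (hn : 0 < n) (hMN : M ≤ N)
    (σ L : ℝ) (hσ : 0 < σ) (hL : 0 < L)
    (f : Fin N → E → ℝ) (hf : ∀ i, Differentiable ℝ (f i))
    (hfb : ∀ i x, ‖gradient (f i) x‖ ≤ σ)
    (G : E → ℝ) (hG : ∀ θ, G θ = (1 / (M : ℝ)) * ∑ i : Fin M, f (Fin.castLE hMN i) θ)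
    (hGdiff : Differentiable ℝ G)
    (hGL : ∀ x y, ‖gradient G x - gradient G y‖ ≤ L * ‖x - y‖)
    (U : E → (Fin n → Fin N) → ℝ → E)
    (hU : ∀ θ B α, U θ B α = θ - (α / (n : ℝ)) • ∑ k : Fin n,
        max ⟪gradient G θ, gradient (f (B k)) θ⟫ 0 • gradient (f (B k)) θ)
    (α κ : ℝ) (hα : 0 < α)
    (hκ : κ = (α / (n : ℝ)) * (1 - L * α * σ ^ 2 / 2)) (hκpos : 0 < κ)
    (μ : (Fin n → Fin N) → ℝ)
    (hμ0 : ∀ B, 0 ≤ μ B) (hμ1 : ∑ B : Fin n → Fin N, μ B = 1)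
    (p : ℝ) (hp : 0 < p)
    (hμp : ∀ i : Fin M,
      p ≤ ∑ B ∈ Finset.univ.filter (fun B : Fin n → Fin N => ∃ k, B k = Fin.castLE hMN i), μ B)
    (θ : E) :
    ∑ c : Fin n → Fin N, μ c * G (U θ c α) ≤ G θ - p * κ * ‖gradient G θ‖ ^ 4 := by
  set g : E := gradient G θ with hg
  set w : Fin N → ℝ := fun i => max ⟪g, gradient (f i) θ⟫ 0 with hw
  have hw0 : ∀ i, 0 ≤ w i := fun i => le_max_right _ _
  have hwa : ∀ i, w i * ⟪g, gradient (f i) θ⟫ = w i ^ 2 := by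
    intro i
    rcases le_or_gt ⟪g, gradient (f i) θ⟫ 0 with h | h
    · rw [hw]; dsimp only; rw [max_eq_right h]; ring
    · rw [hw]; dsimp only; rw [max_eq_left h.le]; ring
  have hn0 : (0:ℝ) < (n:ℝ) := by exact_mod_cast hn
  -- (i) per-batch descent
  have stepc : ∀ c : Fin n → Fin N,
      G (U θ c α) ≤ G θ - κ * ∑ k : Fin n, w (c k) ^ 2 := by
    intro c
    set S : E := ∑ k : Fin n, w (c k) • gradient (f (c k)) θ with hS
    set W : ℝ := ∑ k : Fin n, w (c k) ^ 2 with hW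
    have hWnn : 0 ≤ W := Finset.sum_nonneg fun k _ => sq_nonneg _
    have hdiff : U θ c α - θ = -((α / n) • S) := by
      rw [hU]; abel
    have hinner : ⟪g, U θ c α - θ⟫ = -(α / n) * W := by
      rw [hdiff, inner_neg_right, inner_smul_right, hS, inner_sum]
      simp only [real_inner_smul_right]
      rw [Finset.sum_congr rfl fun k _ => hwa (c k)]
      ring_nf
      rw [hW]
    have hSnorm : ‖S‖ ≤ σ * ∑ k : Fin n, w (c k) := by
      calc ‖S‖ ≤ ∑ k : Fin n, ‖w (c k) • gradient (f (c k)) θ‖ := norm_sum_le _ _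
        _ ≤ ∑ k : Fin n, w (c k) * σ := by
            apply Finset.sum_le_sum
            intro k _
            rw [norm_smul, Real.norm_eq_abs, abs_of_nonneg (hw0 _)]
            exact mul_le_mul_of_nonneg_left (hfb _ _) (hw0 _)
        _ = σ * ∑ k : Fin n, w (c k) := by rw [← Finset.sum_mul]; ring
    have hsq : (∑ k : Fin n, w (c k)) ^ 2 ≤ (n : ℝ) * W := by
      have := sq_sum_le_card_mul_sum_sq (s := (Finset.univ : Finset (Fin n)))
        (f := fun k => w (c k))
      simpa [hW] using this
    have hnormsq : ‖U θ c α - θ‖ ^ 2 ≤ (α / n) ^ 2 * (σ ^ 2 * ((n:ℝ) * W)) := by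
      rw [hdiff, norm_neg, norm_smul]
      have h1 : ‖S‖ ^ 2 ≤ σ ^ 2 * ((n:ℝ) * W) := by
        calc ‖S‖ ^ 2 ≤ (σ * ∑ k : Fin n, w (c k)) ^ 2 := by
              apply pow_le_pow_left₀ (norm_nonneg _) hSnorm
          _ = σ ^ 2 * (∑ k : Fin n, w (c k)) ^ 2 := by ring
          _ ≤ σ ^ 2 * ((n:ℝ) * W) := by
              apply mul_le_mul_of_nonneg_left hsq (sq_nonneg _)
      calc (‖(α / n : ℝ)‖ * ‖S‖) ^ 2 = ‖(α / n : ℝ)‖ ^ 2 * ‖S‖ ^ 2 := by ring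
        _ ≤ (α / n) ^ 2 * (σ ^ 2 * ((n:ℝ) * W)) := by
            rw [Real.norm_eq_abs, sq_abs]
            apply mul_le_mul_of_nonneg_left h1 (sq_nonneg _)
    have := descent_lemma hGdiff hGL θ (U θ c α)
    rw [← hg, hinner] at this
    have hL2 : L / 2 * ‖U θ c α - θ‖ ^ 2 ≤ L / 2 * ((α / n) ^ 2 * (σ ^ 2 * ((n:ℝ) * W))) :=
      mul_le_mul_of_nonneg_left hnormsq (by linarith)
    have hκW : -(α / n) * W + L / 2 * ((α / n) ^ 2 * (σ ^ 2 * ((n:ℝ) * W))) = -κ * W := by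
      rw [hκ]; field_simp; ring
    nlinarith
  -- (iii) lower bound on expected batch weight mass
  have fiber : ∀ c : Fin n → Fin N,
      (∑ i : Fin M, if (∃ k, c k = Fin.castLE hMN i) then w (Fin.castLE hMN i) ^ 2 else 0)
        ≤ ∑ k : Fin n, w (c k) ^ 2 := by
    intro c
    set F : Fin N → ℝ := fun j => if (∃ k, c k = j) then w j ^ 2 else 0 with hF
    have hFnn : ∀ j, 0 ≤ F j := by
      intro j; rw [hF]; dsimp; split
      · exact sq_nonneg _
      · exact le_refl 0
    have step1 : (∑ i : Fin M, F (Fin.castLE hMN i)) ≤ ∑ j : Fin N, F j := by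
      have himg : ∑ j ∈ Finset.univ.image (Fin.castLE hMN), F j
          = ∑ i : Fin M, F (Fin.castLE hMN i) :=
        Finset.sum_image (fun a _ b _ h => Fin.castLE_injective hMN h)
      rw [← himg]
      exact Finset.sum_le_sum_of_subset_of_nonneg (Finset.subset_univ _)
        (fun j _ _ => hFnn j)
    have step2 : ∑ j : Fin N, F j ≤ ∑ k : Fin n, w (c k) ^ 2 := by
      have efil : (Finset.univ.filter (fun j => ∃ k, c k = j)) = Finset.univ.image c := by
        ext j
        simp [eq_comm]
      have e1 : ∑ j : Fin N, F j = ∑ j ∈ Finset.univ.image c, w j ^ 2 := by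
        rw [hF, ← Finset.sum_filter, efil]
      have e2 : ∑ k : Fin n, w (c k) ^ 2
          = ∑ j ∈ Finset.univ.image c, ((Finset.univ : Finset (Fin n)).filter fun a => c a = j).card • (w j ^ 2) :=
        Finset.sum_comp (fun j => w j ^ 2) c
      rw [e1, e2]
      apply Finset.sum_le_sum
      intro j hj
      obtain ⟨k, _, hk⟩ := Finset.mem_image.mp hj
      have hcard : 1 ≤ ((Finset.univ : Finset (Fin n)).filter fun a => c a = j).card := by
        refine Finset.card_pos.mpr ⟨k, ?_⟩
        simp [hk]
      calc w j ^ 2 = 1 • (w j ^ 2) := (one_smul _ _).symm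
        _ ≤ ((Finset.univ : Finset (Fin n)).filter fun a => c a = j).card • (w j ^ 2) := by
            exact nsmul_le_nsmul_left (sq_nonneg _) hcard
    exact le_trans step1 step2
  -- (iii) averaged mass lower bound
  have ave : p * ∑ i : Fin M, w (Fin.castLE hMN i) ^ 2
      ≤ ∑ c : Fin n → Fin N, μ c * ∑ k : Fin n, w (c k) ^ 2 := by
    have h1 : ∀ c : Fin n → Fin N, μ c *
        (∑ i : Fin M, if (∃ k, c k = Fin.castLE hMN i) then w (Fin.castLE hMN i) ^ 2 else 0)
        ≤ μ c * ∑ k : Fin n, w (c k) ^ 2 :=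
      fun c => mul_le_mul_of_nonneg_left (fiber c) (hμ0 c)
    calc p * ∑ i : Fin M, w (Fin.castLE hMN i) ^ 2
        = ∑ i : Fin M, p * w (Fin.castLE hMN i) ^ 2 := Finset.mul_sum _ _ _
      _ ≤ ∑ i : Fin M,
          (∑ c ∈ Finset.univ.filter (fun c : Fin n → Fin N => ∃ k, c k = Fin.castLE hMN i), μ c)
            * w (Fin.castLE hMN i) ^ 2 := by
          apply Finset.sum_le_sum
          intro i _
          exact mul_le_mul_of_nonneg_right (hμp i) (sq_nonneg _)
      _ = ∑ i : Fin M, ∑ c : Fin n → Fin N,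
          μ c * (if (∃ k, c k = Fin.castLE hMN i) then w (Fin.castLE hMN i) ^ 2 else 0) := by
          apply Finset.sum_congr rfl
          intro i _
          rw [Finset.sum_mul, Finset.sum_filter]
          apply Finset.sum_congr rfl
          intro c _
          split <;> simp
      _ = ∑ c : Fin n → Fin N, μ c *
          (∑ i : Fin M, if (∃ k, c k = Fin.castLE hMN i) then w (Fin.castLE hMN i) ^ 2 else 0) := by
          rw [Finset.sum_comm]
          apply Finset.sum_congr rfl
          intro c _
          rw [Finset.mul_sum]
      _ ≤ ∑ c : Fin n → Fin N, μ c * ∑ k : Fin n, w (c k) ^ 2 :=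
          Finset.sum_le_sum fun c _ => h1 c
  -- (iv) gradient norm bound
  have normle : ‖g‖ ^ 4 ≤ ∑ i : Fin M, w (Fin.castLE hMN i) ^ 2 := by
    have hM0 : (0:ℝ) < (M:ℝ) := by exact_mod_cast hM
    have hM1 : (1:ℝ) ≤ (M:ℝ) := by exact_mod_cast hM
    have hgrad : g = (1 / (M:ℝ)) • ∑ i : Fin M, gradient (f (Fin.castLE hMN i)) θ :=
      gradient_avg (fun i => f (Fin.castLE hMN i)) (fun i => hf _) (1/(M:ℝ)) G hG θ
    have hnorm2 : (M:ℝ) * ‖g‖ ^ 2 ≤ ∑ i : Fin M, w (Fin.castLE hMN i) := by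
      have : ‖g‖ ^ 2 = ⟪g, g⟫ := (real_inner_self_eq_norm_sq g).symm
      rw [this]
      nth_rewrite 2 [hgrad]
      rw [inner_smul_right, inner_sum]
      have hle : ∑ i : Fin M, ⟪g, gradient (f (Fin.castLE hMN i)) θ⟫
          ≤ ∑ i : Fin M, w (Fin.castLE hMN i) :=
        Finset.sum_le_sum fun i _ => le_max_left _ _
      calc (M:ℝ) * (1 / (M:ℝ) * ∑ i : Fin M, ⟪g, gradient (f (Fin.castLE hMN i)) θ⟫)
          = ∑ i : Fin M, ⟪g, gradient (f (Fin.castLE hMN i)) θ⟫ := by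
            field_simp
        _ ≤ ∑ i : Fin M, w (Fin.castLE hMN i) := hle
    have hcs : (∑ i : Fin M, w (Fin.castLE hMN i)) ^ 2
        ≤ (M:ℝ) * ∑ i : Fin M, w (Fin.castLE hMN i) ^ 2 := by
      have := sq_sum_le_card_mul_sum_sq (s := (Finset.univ : Finset (Fin M)))
        (f := fun i => w (Fin.castLE hMN i))
      simpa using this
    have hsw : 0 ≤ ∑ i : Fin M, w (Fin.castLE hMN i) :=
      Finset.sum_nonneg fun i _ => hw0 _
    have h4 : ‖g‖ ^ 4 = (‖g‖ ^ 2) ^ 2 := by ring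
    rw [h4]
    have hy : (0:ℝ) ≤ (‖g‖ ^ 2) ^ 2 := sq_nonneg _
    have hSq : (0:ℝ) ≤ ∑ i : Fin M, w (Fin.castLE hMN i) ^ 2 :=
      Finset.sum_nonneg fun i _ => sq_nonneg _
    have hsq2 : ((M:ℝ) * ‖g‖ ^ 2) ^ 2 ≤ (∑ i : Fin M, w (Fin.castLE hMN i)) ^ 2 :=
      pow_le_pow_left₀ (by positivity) hnorm2 2
    have key2 : (M:ℝ) ^ 2 * (‖g‖ ^ 2) ^ 2 ≤ (M:ℝ) * ∑ i : Fin M, w (Fin.castLE hMN i) ^ 2 := by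
      nlinarith [hsq2, hcs]
    nlinarith [key2, mul_nonneg (mul_nonneg hM0.le (sub_nonneg.mpr hM1)) hy]
  -- combine
  have final : ∑ c : Fin n → Fin N, μ c * G (U θ c α)
      ≤ G θ - κ * ∑ c : Fin n → Fin N, μ c * ∑ k : Fin n, w (c k) ^ 2 := by
    calc ∑ c : Fin n → Fin N, μ c * G (U θ c α)
        ≤ ∑ c : Fin n → Fin N, μ c * (G θ - κ * ∑ k : Fin n, w (c k) ^ 2) :=
          Finset.sum_le_sum fun c _ => mul_le_mul_of_nonneg_left (stepc c) (hμ0 c)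
      _ = (∑ c : Fin n → Fin N, μ c) * G θ
          - κ * ∑ c : Fin n → Fin N, μ c * ∑ k : Fin n, w (c k) ^ 2 := by
          rw [Finset.sum_mul, Finset.mul_sum, ← Finset.sum_sub_distrib]
          apply Finset.sum_congr rfl
          intro c _
          ring
      _ = G θ - κ * ∑ c : Fin n → Fin N, μ c * ∑ k : Fin n, w (c k) ^ 2 := by
          rw [hμ1, one_mul]
  have hfin2 : p * ‖g‖ ^ 4 ≤ ∑ c : Fin n → Fin N, μ c * ∑ k : Fin n, w (c k) ^ 2 := by
    calc p * ‖g‖ ^ 4 ≤ p * ∑ i : Fin M, w (Fin.castLE hMN i) ^ 2 :=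
          mul_le_mul_of_nonneg_left normle hp.le
      _ ≤ _ := ave
  have hmul := mul_le_mul_of_nonneg_left hfin2 hκpos.le
  linarith [final, hmul]

/-- Deterministic iterate map. -/
def iterDet {E β : Type*} (U : E → β → ℝ → E) (α : ℝ) (θ₀ : E) : ℕ → (ℕ → β) → E
  | 0, _ => θ₀
  | t + 1, b => U (iterDet U α θ₀ t b) (b t) α

lemma iterDet_congr {E β : Type*} (U : E → β → ℝ → E) (α : ℝ) (θ₀ : E) :
    ∀ (t : ℕ) (b b' : ℕ → β), (∀ s, s < t → b s = b' s) →
      iterDet U α θ₀ t b = iterDet U α θ₀ t b' := by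
  intro t
  induction t with
  | zero => intro b b' _; rfl
  | succ t ih =>
    intro b b' hbb
    show U (iterDet U α θ₀ t b) (b t) α = U (iterDet U α θ₀ t b') (b' t) α
    rw [ih b b' (fun s hs => hbb s (Nat.lt_succ_of_lt hs)), hbb t (Nat.lt_succ_self t)]

/-- Extend a finite tuple to `ℕ` by a default value. -/
def extTup {β : Type*} [Inhabited β] {t : ℕ} (b : Fin t → β) : ℕ → β :=
  fun s => if h : s < t then b ⟨s, h⟩ else default

end AuxLemmas

set_option maxHeartbeats 1600000 in
/-- Theorem 2, convergence rate: suppose `G` is bounded below with infimum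
`G*`, `0 < α < 2/(L·σ²)`, and `κ = (α/n)·(1 − L·α·σ²/2) > 0`. Let `(B_t)` be an i.i.d.
sequence of batches with common distribution `μ`, where `μ(i ∈ B) ≥ p > 0` for every index
`i ∈ {1, …, M}`. Fix a deterministic initial point `θ₀` and define the random iterates
`θ (t+1) = U (θ t) (B t) α`. Then for every horizon `T ≥ 1`,
`min_{0 ≤ t ≤ T−1} E[‖∇G(θ_t)‖²] ≤ √((G(θ₀) − G*)/(p·κ)) · (1/√T)`. -/
theorem reweighted_sgd_convergence_rate
    (d N M n : ℕ) (hd : 0 < d) (hN : 0 < N) (hM : 0 < M) (hn : 0 < n) (hMN : M ≤ N)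
    (σ L : ℝ) (hσ : 0 < σ) (hL : 0 < L)
    (f : Fin N → EuclideanSpace ℝ (Fin d) → ℝ)
    (hf : ∀ i, ContDiff ℝ 1 (f i))
    (hfb : ∀ i x, ‖gradient (f i) x‖ ≤ σ)
    (G : EuclideanSpace ℝ (Fin d) → ℝ)
    (hG : ∀ θ, G θ = (1 / (M : ℝ)) * ∑ i : Fin M, f (Fin.castLE hMN i) θ)
    (hGL : ∀ x y, ‖gradient G x - gradient G y‖ ≤ L * ‖x - y‖)
    (U : EuclideanSpace ℝ (Fin d) → (Fin n → Fin N) → ℝ → EuclideanSpace ℝ (Fin d))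
    (hU : ∀ θ B α, U θ B α = θ - (α / (n : ℝ)) • ∑ k : Fin n,
        max ⟪gradient G θ, gradient (f (B k)) θ⟫ 0 • gradient (f (B k)) θ)
    (Gstar : ℝ) (hGstar : IsGLB (Set.range G) Gstar)
    (α : ℝ) (hα : 0 < α) (hα' : α < 2 / (L * σ ^ 2))
    (κ : ℝ) (hκ : κ = (α / (n : ℝ)) * (1 - L * α * σ ^ 2 / 2)) (hκpos : 0 < κ)
    (μ : (Fin n → Fin N) → ℝ)
    (hμ0 : ∀ B, 0 ≤ μ B) (hμ1 : ∑ B : Fin n → Fin N, μ B = 1)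
    (p : ℝ) (hp : 0 < p)
    (hμp : ∀ i : Fin M,
      p ≤ ∑ B ∈ Finset.univ.filter (fun B : Fin n → Fin N => ∃ k, B k = Fin.castLE hMN i), μ B)
    (Ω : Type*) [MeasurableSpace Ω] (ℙ : Measure Ω) [IsProbabilityMeasure ℙ]
    (B : ℕ → Ω → (Fin n → Fin N)) (hBmeas : ∀ t, Measurable (B t))
    -- `(B_t)` is i.i.d. with common distribution `μ`: finite-dimensional distributions factor.
    (hiid : ∀ (s : Finset ℕ) (b : ℕ → (Fin n → Fin N)),
      ℙ {ω | ∀ t ∈ s, B t ω = b t} = ∏ t ∈ s, ENNReal.ofReal (μ (b t)))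
    (θ₀ : EuclideanSpace ℝ (Fin d))
    (θ : ℕ → Ω → EuclideanSpace ℝ (Fin d))
    (hθ0 : ∀ ω, θ 0 ω = θ₀)
    (hθ : ∀ t ω, θ (t + 1) ω = U (θ t ω) (B t ω) α)
    (Thor : ℕ) (hThor : 1 ≤ Thor) :
    (Finset.range Thor).inf' (Finset.nonempty_range_iff.mpr (by omega))
        (fun t => ∫ ω, ‖gradient G (θ t ω)‖ ^ 2 ∂ℙ) ≤
      Real.sqrt ((G θ₀ - Gstar) / (p * κ)) * (1 / Real.sqrt (Thor : ℝ)) := by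
  classical
  haveI : Inhabited (Fin N) := ⟨⟨0, hN⟩⟩
  have hfd : ∀ i, Differentiable ℝ (f i) := fun i => (hf i).differentiable one_ne_zero
  have hGdiff : Differentiable ℝ G := by
    have hGeq : G = fun θ => (1 / (M : ℝ)) * ∑ i : Fin M, f (Fin.castLE hMN i) θ := funext hG
    rw [hGeq]
    exact ((Differentiable.fun_sum fun i _ => hfd (Fin.castLE hMN i)).const_mul _)
  set It : ℕ → (ℕ → (Fin n → Fin N)) → EuclideanSpace ℝ (Fin d) := iterDet U α θ₀ with hIt
  have hItθ : ∀ t ω, θ t ω = It t (fun s => B s ω) := by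
    intro t
    induction t with
    | zero => intro ω; rw [hθ0]; rfl
    | succ t ih => intro ω; rw [hθ, ih]; rfl
  -- The product weights
  have hP0 : ∀ (t : ℕ) (b : Fin t → Fin n → Fin N), 0 ≤ ∏ s : Fin t, μ (b s) :=
    fun t b => Finset.prod_nonneg fun s _ => hμ0 _
  have hP1 : ∀ t : ℕ, ∑ b : Fin t → Fin n → Fin N, ∏ s : Fin t, μ (b s) = 1 := by
    intro t
    have h := Finset.prod_univ_sum
      (fun _ : Fin t => (Finset.univ : Finset (Fin n → Fin N))) (fun _ c => μ c)
    rw [Fintype.piFinset_univ] at h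
    rw [← h]
    simp [hμ1]
  -- Events and their probabilities
  have hEmeas : ∀ (t : ℕ) (b : Fin t → Fin n → Fin N),
      MeasurableSet {ω | ∀ s : Fin t, B s ω = b s} := by
    intro t b
    have : {ω | ∀ s : Fin t, B s ω = b s} = ⋂ s : Fin t, (B s) ⁻¹' {b s} := by
      ext ω; simp [Set.mem_iInter]
    rw [this]
    exact MeasurableSet.iInter fun s => (hBmeas _) (measurableSet_singleton _)
  have hEprob : ∀ (t : ℕ) (b : Fin t → Fin n → Fin N),
      ℙ {ω | ∀ s : Fin t, B s ω = b s} = ENNReal.ofReal (∏ s : Fin t, μ (b s)) := by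
    intro t b
    have hset : {ω | ∀ s : Fin t, B s ω = b s}
        = {ω | ∀ s ∈ Finset.range t, B s ω = extTup b s} := by
      ext ω
      constructor
      · intro h s hs
        have hs' := Finset.mem_range.mp hs
        have := h ⟨s, hs'⟩
        simpa [extTup, dif_pos hs'] using this
      · intro h s
        have := h s.val (Finset.mem_range.mpr s.isLt)
        simpa [extTup, dif_pos s.isLt] using this
    rw [hset, hiid]
    rw [← ENNReal.ofReal_prod_of_nonneg (fun i _ => hμ0 _)]
    congr 1
    rw [← Fin.prod_univ_eq_prod_range (fun s => μ (extTup b s)) t]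
    apply Finset.prod_congr rfl
    intro s _
    congr 1
    simp [extTup, s.isLt]
  -- Key: integrals of functions of the iterates are finite weighted sums
  have key : ∀ (t : ℕ) (h : EuclideanSpace ℝ (Fin d) → ℝ),
      ∫ ω, h (θ t ω) ∂ℙ
        = ∑ b : Fin t → Fin n → Fin N, (∏ s : Fin t, μ (b s)) * h (It t (extTup b)) := by
    intro t h
    have hdecomp : ∀ ω, h (θ t ω) = ∑ b : Fin t → Fin n → Fin N,
        Set.indicator {ω' | ∀ s : Fin t, B s ω' = b s} (fun _ => h (It t (extTup b))) ω := by
      intro ω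
      rw [Finset.sum_eq_single (fun s : Fin t => B s ω)]
      · rw [Set.indicator_of_mem (by intro s; rfl)]
        rw [hItθ]
        congr 1
        apply iterDet_congr
        intro s hs
        simp [extTup, dif_pos hs]
      · intro b _ hb
        apply Set.indicator_of_notMem
        intro hmem
        exact hb (funext fun s => (hmem s).symm)
      · intro habs; exact absurd (Finset.mem_univ _) habs
    have hrw : (fun ω => h (θ t ω)) = fun ω => ∑ b : Fin t → Fin n → Fin N,
        Set.indicator {ω' | ∀ s : Fin t, B s ω' = b s} (fun _ => h (It t (extTup b))) ω :=
      funext hdecomp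
    calc ∫ ω, h (θ t ω) ∂ℙ
        = ∫ ω, ∑ b : Fin t → Fin n → Fin N,
            Set.indicator {ω' | ∀ s : Fin t, B s ω' = b s}
              (fun _ => h (It t (extTup b))) ω ∂ℙ := by rw [hrw]
      _ = ∑ b : Fin t → Fin n → Fin N, ∫ ω,
            Set.indicator {ω' | ∀ s : Fin t, B s ω' = b s}
              (fun _ => h (It t (extTup b))) ω ∂ℙ := by
          apply integral_finset_sum
          intro b _
          exact (integrable_const _).indicator (hEmeas t b)
      _ = ∑ b : Fin t → Fin n → Fin N, (∏ s : Fin t, μ (b s)) * h (It t (extTup b)) := by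
          apply Finset.sum_congr rfl
          intro b _
          rw [integral_indicator_const _ (hEmeas t b), measureReal_def, hEprob t b,
            ENNReal.toReal_ofReal (hP0 t b), smul_eq_mul]
  -- Expected objective and fourth-moment sums
  set EG : ℕ → ℝ := fun t => ∑ b : Fin t → Fin n → Fin N,
      (∏ s : Fin t, μ (b s)) * G (It t (extTup b)) with hEG
  set Q : ℕ → ℝ := fun t => ∑ b : Fin t → Fin n → Fin N,
      (∏ s : Fin t, μ (b s)) * ‖gradient G (It t (extTup b))‖ ^ 4 with hQ
  have hGstar_le : ∀ x, Gstar ≤ G x := fun x => hGstar.1 ⟨x, rfl⟩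
  have hEGlb : ∀ t, Gstar ≤ EG t := by
    intro t
    calc Gstar = ∑ b : Fin t → Fin n → Fin N, (∏ s : Fin t, μ (b s)) * Gstar := by
          rw [← Finset.sum_mul, hP1, one_mul]
      _ ≤ EG t := Finset.sum_le_sum fun b _ =>
          mul_le_mul_of_nonneg_left (hGstar_le _) (hP0 t b)
  have hQ0 : ∀ t, 0 ≤ Q t := by
    intro t
    apply Finset.sum_nonneg
    intro b _
    exact mul_nonneg (hP0 t b) (by positivity)
  -- one-step recursion
  have hstep : ∀ t, EG (t + 1) ≤ EG t - p * κ * Q t := by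
    intro t
    have hsnoc_last : ∀ (b : Fin t → Fin n → Fin N) (c : Fin n → Fin N),
        extTup (Fin.snoc b c : Fin (t+1) → Fin n → Fin N) t = c := by
      intro b c
      have ht : t < t + 1 := Nat.lt_succ_self t
      simp only [extTup, dif_pos ht]
      have : (⟨t, ht⟩ : Fin (t+1)) = Fin.last t := rfl
      rw [this, Fin.snoc_last]
    have hsnoc_init : ∀ (b : Fin t → Fin n → Fin N) (c : Fin n → Fin N) (s : ℕ), s < t →
        extTup (Fin.snoc b c : Fin (t+1) → Fin n → Fin N) s = extTup b s := by
      intro b c s hs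
      have hs' : s < t + 1 := Nat.lt_succ_of_lt hs
      simp only [extTup, dif_pos hs', dif_pos hs]
      have : (⟨s, hs'⟩ : Fin (t+1)) = Fin.castSucc ⟨s, hs⟩ := rfl
      rw [this, Fin.snoc_castSucc]
    have hre : EG (t + 1) = ∑ b : Fin t → Fin n → Fin N, ∑ c : Fin n → Fin N,
        (∏ s : Fin t, μ (b s)) * (μ c * G (U (It t (extTup b)) c α)) := by
      rw [hEG]
      dsimp only
      rw [← Fintype.sum_equiv (Fin.snocEquiv (fun _ : Fin (t+1) => Fin n → Fin N))
        (fun x : (Fin n → Fin N) × (Fin t → Fin n → Fin N) =>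
          (∏ s : Fin t, μ (x.2 s)) * (μ x.1 * G (U (It t (extTup x.2)) x.1 α)))
        (fun b : Fin (t+1) → Fin n → Fin N =>
          (∏ s : Fin (t+1), μ (b s)) * G (It (t+1) (extTup b)))
        ?_]
      · rw [Fintype.sum_prod_type]
        rw [Finset.sum_comm]
      · rintro ⟨c, b⟩
        have e1 : ∏ s : Fin (t+1), μ ((Fin.snocEquiv (fun _ => Fin n → Fin N)) (c, b) s)
            = (∏ s : Fin t, μ (b s)) * μ c := by
          rw [Fin.prod_univ_castSucc]
          simp [Fin.snocEquiv, Fin.snoc_castSucc, Fin.snoc_last]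
        have e2 : It (t+1) (extTup ((Fin.snocEquiv (fun _ => Fin n → Fin N)) (c, b)))
            = U (It t (extTup b)) c α := by
          show U (It t (extTup (Fin.snoc b c))) (extTup (Fin.snoc b c : Fin (t+1) → _) t) α = _
          rw [hsnoc_last b c]
          have h3 : It t (extTup (Fin.snoc b c : Fin (t+1) → Fin n → Fin N))
              = It t (extTup b) :=
            iterDet_congr U α θ₀ t _ _ (fun s hs => hsnoc_init b c s hs)
          rw [h3]
        simp only [Fin.snocEquiv] at e1 e2 ⊢
        rw [e1, e2]
        ring
    have hinner : ∀ b : Fin t → Fin n → Fin N,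
        ∑ c : Fin n → Fin N, μ c * G (U (It t (extTup b)) c α)
          ≤ G (It t (extTup b)) - p * κ * ‖gradient G (It t (extTup b))‖ ^ 4 :=
      fun b => step_avg N M n hM hn hMN σ L hσ hL f hfd hfb G hG hGdiff hGL U hU α κ hα
        hκ hκpos μ hμ0 hμ1 p hp hμp (It t (extTup b))
    calc EG (t + 1)
        = ∑ b : Fin t → Fin n → Fin N, (∏ s : Fin t, μ (b s)) *
            ∑ c : Fin n → Fin N, μ c * G (U (It t (extTup b)) c α) := by
          rw [hre]
          apply Finset.sum_congr rfl
          intro b _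
          rw [Finset.mul_sum]
      _ ≤ ∑ b : Fin t → Fin n → Fin N, (∏ s : Fin t, μ (b s)) *
            (G (It t (extTup b)) - p * κ * ‖gradient G (It t (extTup b))‖ ^ 4) :=
          Finset.sum_le_sum fun b _ =>
            mul_le_mul_of_nonneg_left (hinner b) (hP0 t b)
      _ = EG t - p * κ * Q t := by
          rw [hEG, hQ]
          dsimp only
          rw [Finset.mul_sum, ← Finset.sum_sub_distrib]
          apply Finset.sum_congr rfl
          intro b _
          ring
  -- telescoping
  have htel : ∀ T : ℕ, EG T + p * κ * ∑ t ∈ Finset.range T, Q t ≤ G θ₀ := by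
    intro T
    induction T with
    | zero =>
      simp only [Finset.range_zero, Finset.sum_empty, mul_zero, add_zero]
      have hEG0 : EG 0 = G θ₀ := by
        rw [hEG]
        dsimp only
        have hterm : ∀ b : Fin 0 → Fin n → Fin N,
            (∏ s : Fin 0, μ (b s)) * G (It 0 (extTup b)) = G θ₀ := by
          intro b
          rw [Fin.prod_univ_zero, one_mul]
          rfl
        rw [Finset.sum_congr rfl fun b _ => hterm b]
        rw [Finset.sum_const, Finset.card_univ]
        simp
      rw [hEG0]
    | succ T ih =>
      have := hstep T
      rw [Finset.sum_range_succ]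
      linarith
  -- conclude
  have hsum : p * κ * ∑ t ∈ Finset.range Thor, Q t ≤ G θ₀ - Gstar := by
    have h1 := htel Thor
    have h2 := hEGlb Thor
    linarith
  have hpκ : 0 < p * κ := mul_pos hp hκpos
  obtain ⟨t₀, ht₀mem, ht₀min⟩ := Finset.exists_min_image (Finset.range Thor) Q
    (Finset.nonempty_range_iff.mpr (by omega))
  have hThor0 : (0:ℝ) < (Thor:ℝ) := by
    have : 0 < Thor := by omega
    exact_mod_cast this
  have hQsum : (Thor : ℝ) * Q t₀ ≤ ∑ t ∈ Finset.range Thor, Q t := by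
    calc (Thor : ℝ) * Q t₀ = ∑ _t ∈ Finset.range Thor, Q t₀ := by
          rw [Finset.sum_const, Finset.card_range, nsmul_eq_mul]
      _ ≤ ∑ t ∈ Finset.range Thor, Q t := Finset.sum_le_sum fun t ht => ht₀min t ht
  have hD0 : 0 ≤ G θ₀ - Gstar := by
    have := hGstar_le θ₀; linarith
  have hQb : Q t₀ ≤ (G θ₀ - Gstar) / (p * κ) / Thor := by
    rw [div_div, le_div_iff₀ (by positivity)]
    calc Q t₀ * (p * κ * Thor) = p * κ * ((Thor:ℝ) * Q t₀) := by ring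
      _ ≤ p * κ * ∑ t ∈ Finset.range Thor, Q t := mul_le_mul_of_nonneg_left hQsum hpκ.le
      _ ≤ G θ₀ - Gstar := hsum
  have hS : ∫ ω, ‖gradient G (θ t₀ ω)‖ ^ 2 ∂ℙ ≤ Real.sqrt (Q t₀) := by
    have hkey : ∫ ω, ‖gradient G (θ t₀ ω)‖ ^ 2 ∂ℙ
        = ∑ b : Fin t₀ → Fin n → Fin N,
            (∏ s : Fin t₀, μ (b s)) * ‖gradient G (It t₀ (extTup b))‖ ^ 2 :=
      key t₀ (fun x => ‖gradient G x‖ ^ 2)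
    rw [hkey]
    have hj := weighted_jensen (fun b : Fin t₀ → Fin n → Fin N => ∏ s : Fin t₀, μ (b s))
      (fun b => ‖gradient G (It t₀ (extTup b))‖ ^ 2) (hP0 t₀) (hP1 t₀)
    have hq : ∑ b : Fin t₀ → Fin n → Fin N,
        (∏ s : Fin t₀, μ (b s)) * (‖gradient G (It t₀ (extTup b))‖ ^ 2) ^ 2 = Q t₀ := by
      rw [hQ]
      apply Finset.sum_congr rfl
      intro b _
      ring
    rw [hq] at hj
    exact hj
  have hmono : Real.sqrt (Q t₀) ≤ Real.sqrt ((G θ₀ - Gstar) / (p * κ) / Thor) :=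
    Real.sqrt_le_sqrt hQb
  have hsplit : Real.sqrt ((G θ₀ - Gstar) / (p * κ) / Thor)
      = Real.sqrt ((G θ₀ - Gstar) / (p * κ)) * (1 / Real.sqrt Thor) := by
    rw [Real.sqrt_div (div_nonneg hD0 hpκ.le), one_div, div_eq_mul_inv]
  refine le_trans (Finset.inf'_le _ ht₀mem) ?_
  calc ∫ ω, ‖gradient G (θ t₀ ω)‖ ^ 2 ∂ℙ ≤ Real.sqrt (Q t₀) := hS
    _ ≤ Real.sqrt ((G θ₀ - Gstar) / (p * κ) / Thor) := hmono
    _ = Real.sqrt ((G θ₀ - Gstar) / (p * κ)) * (1 / Real.sqrt Thor) := hsplit
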